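/- The set of records of the walk S_n(2√2) is exactly the set of half even-indexed Pell numbers {P_{2n}/2 : n ≥ 0}. -/

import Mathlib

/-- The deterministic random walk `S_n(ξ) = ∑_{j=1}^n (-1)^⌊j·ξ⌋`. -/
noncomputable def S (ξ : ℝ) (n : ℕ) : ℤ :=
  ∑ j ∈ Finset.Icc 1 n, ((Int.negOnePow ⌊(j : ℝ) * ξ⌋ : ℤˣ) : ℤ)

/-- An index `r` is a record of the walk `S_n(ξ)` if no earlier partial sum equals `S_r(ξ)`. -/
def IsRecord (ξ : ℝ) (r : ℕ) : Prop :=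
  ∀ m < r, S ξ m ≠ S ξ r

/-- The Pell numbers: `P 0 = 0`, `P 1 = 1`, `P (n+2) = 2·P (n+1) + P n`. -/
def pell : ℕ → ℕ
  | 0 => 0
  | 1 => 1
  | n + 2 => 2 * pell (n + 1) + pell n




def hpell : ℕ → ℕ
  | 0 => 1
  | 1 => 1
  | n + 2 => 2 * hpell (n + 1) + hpell n

def nk : ℕ → ℕ
  | 0 => 0
  | k + 1 => nk k + pell (2 * k + 1)

lemma pell_pos : ∀ n, 1 ≤ n → 0 < pell n := by
  intro n h
  induction n with
  | zero => omega
  | succ m ih =>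
    match m, ih with
    | 0, _ => simp [pell]
    | m+1, ih => rw [pell]; have := ih (by omega); omega

lemma pell_lt_succ : ∀ n, 1 ≤ n → pell n < pell (n+1) := by
  intro n h
  match n, h with
  | 1, _ => simp [pell]
  | n+2, _ =>
    have h0 : pell (n+2+1) = 2 * pell (n+2) + pell (n+1) := rfl
    have h1 := pell_pos (n+1) (by omega)
    have h2 := pell_pos (n+2) (by omega)
    omega

lemma pell_strictMonoOn : ∀ m n, 1 ≤ m → m < n → pell m < pell n := by
  intro m n hm hlt
  induction n with
  | zero => omega
  | succ p ih =>
    rcases Nat.lt_or_ge m p with h | h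
    · exact lt_trans (ih h) (pell_lt_succ p (by omega))
    · have : m = p := by omega
      subst this; exact pell_lt_succ m hm

lemma hpell_odd : ∀ n, Odd (hpell n) := by
  intro n
  induction n using Nat.strong_induction_on with
  | _ n ih =>
    match n with
    | 0 => exact ⟨0, rfl⟩
    | 1 => exact ⟨0, rfl⟩
    | n+2 =>
      have := ih n (by omega)
      rw [hpell]
      rcases this with ⟨t, ht⟩
      exact ⟨hpell (n+1) + t, by omega⟩

lemma two_nk (k : ℕ) : 2 * nk k = pell (2 * k) := by
  induction k with
  | zero => simp [nk, pell]
  | succ m ih =>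
    have h2 : 2 * (m+1) = (2*m) + 2 := by ring
    have h1 : 2*(m+1) = 2*m+2 := by ring
    have h0 : pell (2*m+2) = 2 * pell (2*m+1) + pell (2*m) := rfl
    rw [nk, h1]
    omega




noncomputable def sq2 : ℝ := Real.sqrt 2
noncomputable def ep : ℝ := Real.sqrt 2 - 1

lemma sqrt2_sq : Real.sqrt 2 * Real.sqrt 2 = 2 := Real.mul_self_sqrt (by norm_num)

lemma sqrt2_gt : 1 < Real.sqrt 2 := by
  nlinarith [sqrt2_sq, Real.sqrt_nonneg 2]

lemma sqrt2_lt : Real.sqrt 2 < 1.5 := by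
  nlinarith [sqrt2_sq, Real.sqrt_nonneg 2]

lemma ep_pos : 0 < ep := by unfold ep; linarith [sqrt2_gt]
lemma ep_lt_half : ep < 1/2 := by unfold ep; linarith [sqrt2_lt]

lemma id1 : ∀ n, ((hpell n : ℝ)) - (pell n) * Real.sqrt 2 = (1 - Real.sqrt 2)^n := by
  intro n
  induction n using Nat.strong_induction_on with
  | _ n ih =>
    match n with
    | 0 => simp [hpell, pell]
    | 1 => simp [hpell, pell]
    | n+2 =>
      have h1 := ih (n+1) (by omega)
      have h0 := ih n (by omega)
      have e1 : hpell (n+2) = 2*hpell (n+1) + hpell n := rfl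
      have e2 : pell (n+2) = 2*pell (n+1) + pell n := rfl
      have hs := sqrt2_sq
      have key : (1 - Real.sqrt 2)^(n+2) = 2*(1-Real.sqrt 2)^(n+1) + (1-Real.sqrt 2)^n := by
        have expand : (1 - Real.sqrt 2)^(n+2)
            = (1-Real.sqrt 2)^n * ((1-Real.sqrt 2)*(1-Real.sqrt 2)) := by ring
        have expand2 : (1 - Real.sqrt 2)^(n+1) = (1-Real.sqrt 2)^n * (1-Real.sqrt 2) := by ring
        rw [expand, expand2]
        linear_combination (1 - Real.sqrt 2)^n * hs
      rw [e1, e2]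
      push_cast
      linear_combination 2*h1 + h0 + key + (-2)*(1-Real.sqrt 2)^n * hs

lemma id2 : ∀ n, ((hpell n : ℝ)) + (pell n) * Real.sqrt 2 = (1 + Real.sqrt 2)^n := by
  intro n
  induction n using Nat.strong_induction_on with
  | _ n ih =>
    match n with
    | 0 => simp [hpell, pell]
    | 1 => simp [hpell, pell]
    | n+2 =>
      have h1 := ih (n+1) (by omega)
      have h0 := ih n (by omega)
      have e1 : hpell (n+2) = 2*hpell (n+1) + hpell n := rfl
      have e2 : pell (n+2) = 2*pell (n+1) + pell n := rfl
      have hs := sqrt2_sq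
      have key : (1 + Real.sqrt 2)^(n+2) = 2*(1+Real.sqrt 2)^(n+1) + (1+Real.sqrt 2)^n := by
        have expand : (1 + Real.sqrt 2)^(n+2)
            = (1+Real.sqrt 2)^n * ((1+Real.sqrt 2)*(1+Real.sqrt 2)) := by ring
        have expand2 : (1 + Real.sqrt 2)^(n+1) = (1+Real.sqrt 2)^n * (1+Real.sqrt 2) := by ring
        rw [expand, expand2]
        linear_combination (1 + Real.sqrt 2)^n * hs
      rw [e1, e2]
      push_cast
      linear_combination 2*h1 + h0 + key + (-2)*(1+Real.sqrt 2)^n * hs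

lemma pell_even_eq (k : ℕ) : (pell (2*k) : ℝ) * Real.sqrt 2 = (hpell (2*k) : ℝ) - ep^(2*k) := by
  have h := id1 (2*k)
  have : (1 - Real.sqrt 2)^(2*k) = ep^(2*k) := by
    rw [show (1 - Real.sqrt 2) = -ep by unfold ep; ring]
    exact (Even.neg_pow (even_two_mul k) ep)
  rw [this] at h; linarith

lemma pell_odd_eq (k : ℕ) : (pell (2*k+1) : ℝ) * Real.sqrt 2 = (hpell (2*k+1) : ℝ) + ep^(2*k+1) := by
  have h := id1 (2*k+1)
  have : (1 - Real.sqrt 2)^(2*k+1) = -ep^(2*k+1) := by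
    rw [show (1 - Real.sqrt 2) = -ep by unfold ep; ring]
    exact (Odd.neg_pow (by exact ⟨k, by ring⟩) ep)
  rw [this] at h; linarith

lemma key_bound (k : ℕ) : ep^(2*k) * ((pell (2*k+1):ℝ) * (2*Real.sqrt 2)) ≤ 2*Real.sqrt 2 := by
  have h1 := id1 (2*k+1)
  have h2 := id2 (2*k+1)
  have hodd : (1 - Real.sqrt 2)^(2*k+1) = -ep^(2*k+1) := by
    rw [show (1 - Real.sqrt 2) = -ep by unfold ep; ring]
    exact (Odd.neg_pow (by exact ⟨k, by ring⟩) ep)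
  have hps : (pell (2*k+1):ℝ) * (2*Real.sqrt 2) = (1+Real.sqrt 2)^(2*k+1) + ep^(2*k+1) := by
    rw [hodd] at h1; linarith
  rw [hps, mul_add]
  have hmul : ep * (1 + Real.sqrt 2) = 1 := by
    unfold ep; linear_combination sqrt2_sq
  have t1 : ep^(2*k) * (1+Real.sqrt 2)^(2*k+1) = (1 + Real.sqrt 2) := by
    have : ep^(2*k) * (1+Real.sqrt 2)^(2*k+1)
        = (1+Real.sqrt 2) * (ep * (1+Real.sqrt 2))^(2*k) := by rw [mul_pow]; ring
    rw [this, hmul, one_pow, mul_one]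
  have t2 : ep^(2*k) * ep^(2*k+1) ≤ ep := by
    have : ep^(2*k) * ep^(2*k+1) = ep^(4*k+1) := by rw [← pow_add]; ring_nf
    rw [this]
    calc ep^(4*k+1) ≤ ep^1 := by
          apply pow_le_pow_of_le_one (le_of_lt ep_pos) (by linarith [ep_lt_half]) (by omega)
      _ = ep := pow_one ep
  have : ep^(2*k) * (1+Real.sqrt 2)^(2*k+1) + ep^(2*k) * ep^(2*k+1) ≤ (1+Real.sqrt 2) + ep := by
    linarith
  unfold ep at *
  linarith



lemma hp_eq : ∀ n, hpell (n+1) = pell (n+1) + pell n := by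
  intro n
  induction n using Nat.strong_induction_on with
  | _ n ih =>
    match n with
    | 0 => rfl
    | 1 => rfl
    | n+2 =>
      have h1 := ih (n+1) (by omega)
      have h0 := ih n (by omega)
      have e1 : hpell (n+2+1) = 2*hpell (n+2) + hpell (n+1) := rfl
      have e2 : pell (n+2+1) = 2*pell (n+2) + pell (n+1) := rfl
      have e3 : pell (n+2) = 2*pell (n+1) + pell n := rfl
      have c1 : pell (n+1+1) = pell (n+2) := rfl
      have c2 : hpell (n+1+1) = hpell (n+2) := rfl
      omega

lemma desc_id (m q a b : ℤ) (h : q^2 + 1 = 2*m^2) (ha : a = 3*m - 2*q) (hb : b = 3*q - 4*m) :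
    b^2 + 1 = 2*a^2 := by subst ha hb; linear_combination h

lemma negPell : ∀ m : ℕ, 1 ≤ m → ∀ q : ℕ, q*q + 1 = 2*(m*m) →
    ∃ j, m = pell (2*j+1) ∧ q = hpell (2*j+1) := by
  intro m
  induction m using Nat.strong_induction_on with
  | _ m ih =>
    intro hm q h
    rcases Nat.lt_or_ge m 2 with h2 | h2
    · -- m = 1, q = 1
      have hm1 : m = 1 := by omega
      subst hm1
      have hq : q = 1 := by nlinarith
      exact ⟨0, by simp [pell, hpell, hq]⟩
    · -- m ≥ 2; first m ≠ 2
      have hm3 : 3 ≤ m := by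
        rcases Nat.lt_or_ge m 3 with h3 | h3
        · exfalso
          have : m = 2 := by omega
          subst this
          have : q ≤ 2 := by nlinarith
          interval_cases q <;> omega
        · exact h3
      have hqm : m < q := by
        by_contra hc
        push_neg at hc
        nlinarith
      have h2q3m : 2*q < 3*m := by
        by_contra hc
        push_neg at hc
        nlinarith
      have h3q4m : 4*m < 3*q := by
        by_contra hc
        push_neg at hc
        nlinarith
      set a := 3*m - 2*q with ha
      set b := 3*q - 4*m with hb
      have ha' : 3*m = 2*q + a := by omega
      have hb' : 3*q = 4*m + b := by omega
      have ha1 : 1 ≤ a := by omega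
      have haltm : a < m := by omega
      have hnew : b*b + 1 = 2*(a*a) := by
        have := desc_id (m:ℤ) (q:ℤ) (a:ℤ) (b:ℤ)
          (by push_cast; nlinarith [h]) (by push_cast; omega) (by push_cast; omega)
        have h2 : (b:ℤ)*b + 1 = 2*((a:ℤ)*a) := by nlinarith [this]
        exact_mod_cast h2
      obtain ⟨j, hja, hjb⟩ := ih a haltm ha1 b hnew
      have eidx : 2*(j+1)+1 = 2*j+3 := by ring
      have e2 : pell (2*j+3) = 2*pell (2*j+2) + pell (2*j+1) := rfl
      have e3 : pell (2*j+2) = 2*pell (2*j+1) + pell (2*j) := rfl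
      have e4 : hpell (2*j+1) = pell (2*j+1) + pell (2*j) := hp_eq (2*j)
      have e5 : hpell (2*j+3) = pell (2*j+3) + pell (2*j+2) := hp_eq (2*j+2)
      refine ⟨j+1, by rw [eidx]; omega, by rw [eidx]; omega⟩
section L
lemma lemL (k m : ℕ) (hm1 : 1 ≤ m) (hmQ : m < pell (2*k+1)) :
    ep^(2*k) ≤ (m:ℝ) * (2*Real.sqrt 2) - (⌊(m:ℝ) * (2*Real.sqrt 2)⌋ : ℤ) := by
  by_contra hcon
  push_neg at hcon
  set x : ℝ := (m:ℝ) * (2*Real.sqrt 2) with hx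
  set p : ℤ := ⌊x⌋ with hp
  have hfl : (p:ℝ) ≤ x := Int.floor_le x
  have hirr : Irrational x := by
    have h2m : (2*m) ≠ 0 := by omega
    have h' : Irrational ((2*m : ℕ) * Real.sqrt 2) := irrational_sqrt_two.natCast_mul h2m
    have hxe : x = ((2*m:ℕ):ℝ) * Real.sqrt 2 := by rw [hx]; push_cast; ring
    rwa [hxe]
  have hlt : (p:ℝ) < x := lt_of_le_of_ne hfl (fun h => hirr.ne_int p h.symm)
  have hsg := sqrt2_gt
  have hsl := sqrt2_lt
  have hss := sqrt2_sq
  have hepos := ep_pos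
  have hehalf := ep_lt_half
  have hm1' : (1:ℝ) ≤ (m:ℝ) := by exact_mod_cast hm1
  have hp2 : (2:ℤ) ≤ p := by
    rw [hp]
    apply Int.le_floor.mpr
    push_cast
    rw [hx]
    nlinarith
  have hp2' : (2:ℝ) ≤ (p:ℝ) := by exact_mod_cast hp2
  set d : ℤ := 8*(m:ℤ)^2 - p^2 with hd
  have hdr : (d:ℝ) = (x - p)*(x + p) := by
    rw [hd, hx]
    push_cast
    linear_combination (-4*(m:ℝ)^2) * hss
  have hdpos : (0:ℤ) < d := by
    have hpr : (0:ℝ) < (x - p)*(x + p) := mul_pos (by linarith) (by linarith)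
    rw [← hdr] at hpr
    exact_mod_cast hpr
  have heppow : (0:ℝ) < ep^(2*k) := pow_pos hepos _
  have hub : (d:ℝ) < 4*Real.sqrt 2 := by
    have h2 : x + p ≤ 2*x := by linarith
    have hc1 : (d:ℝ) < ep^(2*k) * (2*x) := by
      rw [hdr]
      have : (x - p)*(x + p) < ep^(2*k) * (x+p) := by
        apply mul_lt_mul_of_pos_right hcon (by linarith)
      calc (x - p)*(x + p) < ep^(2*k) * (x+p) := this
        _ ≤ ep^(2*k) * (2*x) := by apply mul_le_mul_of_nonneg_left h2 (le_of_lt heppow)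
    have hmle : (m:ℝ) ≤ (pell (2*k+1):ℝ) := by
      have : m ≤ pell (2*k+1) := le_of_lt hmQ
      exact_mod_cast this
    have hc2 : ep^(2*k) * (2*x) ≤ 2*(2*Real.sqrt 2) := by
      have hkb := key_bound k
      have : ep^(2*k) * x ≤ ep^(2*k) * ((pell (2*k+1):ℝ) * (2*Real.sqrt 2)) := by
        apply mul_le_mul_of_nonneg_left _ (le_of_lt heppow)
        rw [hx]
        apply mul_le_mul_of_nonneg_right hmle (by linarith)
      nlinarith
    linarith
  have hd5 : d ≤ 5 := by
    have h6 : (d:ℝ) < 6 := by nlinarith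
    have : d < 6 := by exact_mod_cast h6
    omega
  have hd1 : (1:ℤ) ≤ d := hdpos
  rcases Int.even_or_odd p with ⟨q, hq⟩ | ⟨t, ht⟩
  · -- p even
    obtain ⟨E, hE4, hEval⟩ : ∃ E : ℤ, d = 4*E ∧ E = 2*(m:ℤ)^2 - q^2 :=
      ⟨2*(m:ℤ)^2 - q^2, by rw [hd, hq]; ring, rfl⟩
    have hE1 : E = 1 := by omega
    have hq1 : (1:ℤ) ≤ q := by omega
    -- to ℕ
    obtain ⟨qn, hqn⟩ : ∃ qn : ℕ, (qn:ℤ) = q := ⟨q.toNat, Int.toNat_of_nonneg (by omega)⟩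
    have hnat : qn*qn + 1 = 2*(m*m) := by
      have : (qn:ℤ)*(qn:ℤ) + 1 = 2*((m:ℤ)*(m:ℤ)) := by rw [hqn]; nlinarith [hE1, hEval]
      exact_mod_cast this
    obtain ⟨j, hjm, hjq⟩ := negPell m hm1 qn hnat
    have hxp : x - p = 2*ep^(2*j+1) := by
      have hpo := pell_odd_eq j
      rw [← hjm] at hpo
      have hq' : (p:ℝ) = 2*(qn:ℝ) := by
        have : (p:ℤ) = 2*qn := by omega
        exact_mod_cast this
      have hqh : (qn:ℝ) = (hpell (2*j+1):ℝ) := by rw [hjq]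
      rw [hx, hq', hqh]
      linarith [hpo]
    rcases Nat.lt_or_ge j k with hjk | hjk
    · -- j < k: contradiction with size of gap
      have hle : ep^(2*k-1) ≤ ep^(2*j+1) := by
        apply pow_le_pow_of_le_one (le_of_lt hepos) (by linarith) (by omega)
      have hsplit : ep^(2*k) = ep^(2*k-1) * ep := by
        rw [← pow_succ]
        congr 1
        omega
      have hpp : (0:ℝ) < ep^(2*k-1) := pow_pos hepos _
      have : ep^(2*k) < 2*ep^(2*j+1) := by
        rw [hsplit]
        calc ep^(2*k-1) * ep < ep^(2*k-1) * 1 := by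
              apply mul_lt_mul_of_pos_left (by linarith) hpp
          _ = ep^(2*k-1) := mul_one _
          _ ≤ ep^(2*j+1) := hle
          _ < 2*ep^(2*j+1) := by linarith [pow_pos hepos (2*j+1)]
      rw [hxp] at hcon
      linarith
    · -- j ≥ k: m too big
      have : pell (2*k+1) ≤ pell (2*j+1) := by
        rcases Nat.eq_or_lt_of_le hjk with he | hl
        · rw [he]
        · exact le_of_lt (pell_strictMonoOn (2*k+1) (2*j+1) (by omega) (by omega))
      omega
  · -- p odd
    obtain ⟨u, hu⟩ := Int.even_mul_succ_self t
    obtain ⟨M, hM⟩ : ∃ M : ℤ, d = 8*M - 8*u - 1 :=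
      ⟨(m:ℤ)^2, by rw [hd, ht]; linear_combination (-4)*hu⟩
    omega
end L

noncomputable def stp (j : ℕ) : ℤ :=
  ((Int.negOnePow ⌊(j : ℝ) * (2 * Real.sqrt 2)⌋ : ℤˣ) : ℤ)

lemma nk_cast_eq (k : ℕ) : ((nk k : ℕ):ℝ) * (2 * Real.sqrt 2) = (pell (2*k):ℝ) * Real.sqrt 2 := by
  have h := two_nk k
  have h' : ((2 * nk k : ℕ):ℝ) = ((pell (2*k) : ℕ):ℝ) := by exact_mod_cast congrArg (Nat.cast (R := ℝ)) h
  push_cast at h' ⊢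
  linear_combination Real.sqrt 2 * h'

lemma floorA (k m : ℕ) (hm1 : 1 ≤ m) (hmQ : m < pell (2*k+1)) :
    ⌊((nk k + m : ℕ):ℝ) * (2 * Real.sqrt 2)⌋ = (hpell (2*k):ℤ) + ⌊(m:ℝ) * (2 * Real.sqrt 2)⌋ := by
  have harg : ((nk k + m : ℕ):ℝ) * (2 * Real.sqrt 2)
      = ((hpell (2*k):ℤ):ℝ) + ((m:ℝ) * (2 * Real.sqrt 2) - ep^(2*k)) := by
    have h1 := nk_cast_eq k
    have h2 := pell_even_eq k
    push_cast
    push_cast at h1 h2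
    nlinarith [h1, h2]
  rw [harg, Int.floor_intCast_add]
  congr 1
  rw [Int.floor_eq_iff]
  constructor
  · have := lemL k m hm1 hmQ
    linarith
  · have h1 : (m:ℝ) * (2 * Real.sqrt 2) < ⌊(m:ℝ) * (2 * Real.sqrt 2)⌋ + 1 := Int.lt_floor_add_one _
    have h2 : (0:ℝ) < ep^(2*k) := pow_pos ep_pos _
    push_cast
    linarith

lemma floorB (k : ℕ) :
    ⌊((nk k + pell (2*k+1) : ℕ):ℝ) * (2 * Real.sqrt 2)⌋ = (hpell (2*k):ℤ) + 2*(hpell (2*k+1):ℤ) - 1 := by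
  have h1 := nk_cast_eq k
  have h2 := pell_even_eq k
  have h3 := pell_odd_eq k
  have hepos := ep_pos
  have hehalf := ep_lt_half
  have hpow : (0:ℝ) < ep^(2*k) := pow_pos hepos _
  have hle1 : ep^(2*k) ≤ 1 := pow_le_one₀ (le_of_lt hepos) (by linarith)
  have hsplit : ep^(2*k+1) = ep^(2*k) * ep := pow_succ ep (2*k)
  have harg : ((nk k + pell (2*k+1) : ℕ):ℝ) * (2 * Real.sqrt 2)
      = ((hpell (2*k):ℝ) + 2*(hpell (2*k+1):ℝ) - 1) + (1 - ep^(2*k) + 2*ep^(2*k+1)) := by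
    push_cast
    push_cast at h1 h2 h3
    nlinarith [h1, h2, h3]
  rw [harg]
  rw [Int.floor_eq_iff]
  constructor
  · push_cast
    nlinarith
  · push_cast
    nlinarith
lemma floorC (k : ℕ) :
    ⌊((pell (2*k+1) : ℕ):ℝ) * (2 * Real.sqrt 2)⌋ = 2*(hpell (2*k+1):ℤ) := by
  have h3 := pell_odd_eq k
  have hepos := ep_pos
  have hehalf := ep_lt_half
  have hpow : (0:ℝ) < ep^(2*k) := pow_pos hepos _
  have hle1 : ep^(2*k) ≤ 1 := pow_le_one₀ (le_of_lt hepos) (by linarith)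
  have hsplit : ep^(2*k+1) = ep^(2*k) * ep := pow_succ ep (2*k)
  rw [Int.floor_eq_iff]
  constructor
  · push_cast
    nlinarith
  · push_cast
    nlinarith

lemma hpell_odd_int (n : ℕ) : Odd ((hpell n : ℤ)) := by
  obtain ⟨t, ht⟩ := hpell_odd n
  exact ⟨t, by exact_mod_cast ht⟩

lemma stepA (k m : ℕ) (hm1 : 1 ≤ m) (hmQ : m < pell (2*k+1)) :
    stp (nk k + m) = - stp m := by
  unfold stp
  rw [floorA k m hm1 hmQ, Int.negOnePow_add,
    Int.negOnePow_odd _ (hpell_odd_int (2*k))]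
  push_cast
  ring

lemma stepB (k : ℕ) : stp (nk k + pell (2*k+1)) = 1 := by
  unfold stp
  rw [floorB k, Int.negOnePow_even]
  · rfl
  · obtain ⟨t, ht⟩ := hpell_odd_int (2*k)
    exact ⟨t + hpell (2*k+1), by omega⟩

lemma stepC (k : ℕ) : stp (pell (2*k+1)) = 1 := by
  unfold stp
  rw [floorC k, Int.negOnePow_even]
  · rfl
  · exact ⟨hpell (2*k+1), by ring⟩

lemma stp_pm (j : ℕ) : stp j = 1 ∨ stp j = -1 := by
  unfold stp
  rcases Int.units_eq_one_or (Int.negOnePow ⌊(j : ℝ) * (2 * Real.sqrt 2)⌋) with h | h <;>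
    rw [h] <;> simp

noncomputable def W (n : ℕ) : ℤ := S (2 * Real.sqrt 2) n

lemma W_zero : W 0 = 0 := by
  unfold W S
  simp

lemma W_succ (n : ℕ) : W (n+1) = W n + stp (n+1) := by
  unfold W S stp
  rw [← Finset.sum_Icc_succ_top (by omega : 1 ≤ n+1)]

lemma Refl : ∀ k, ∀ m, m < pell (2*k+1) → W (nk k + m) = W (nk k) - W m := by
  intro k m
  induction m with
  | zero => intro _; rw [W_zero]; ring_nf
  | succ m ih =>
    intro hm
    have hm' : m < pell (2*k+1) := by omega
    have h1 : nk k + (m+1) = (nk k + m) + 1 := by omega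
    have hs : stp (nk k + m + 1) = - stp (m+1) := by
      have h2 := stepA k (m+1) (by omega) hm
      rwa [show nk k + (m+1) = nk k + m + 1 by omega] at h2
    rw [h1, W_succ, ih hm', W_succ, hs]
    ring

lemma nk_succ (k : ℕ) : nk (k+1) = nk k + pell (2*k+1) := rfl

lemma nk_pos (k : ℕ) (hk : 1 ≤ k) : 1 ≤ nk k := by
  induction k with
  | zero => omega
  | succ m ih =>
    rw [nk_succ]
    have := pell_pos (2*m+1) (by omega)
    omega

lemma nk_lt_succ (k : ℕ) : nk k < nk (k+1) := by
  rw [nk_succ]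
  have := pell_pos (2*k+1) (by omega)
  omega

lemma nk_mono : ∀ {a b : ℕ}, a < b → nk a < nk b := by
  intro a b h
  induction b with
  | zero => omega
  | succ c ih =>
    rcases Nat.lt_or_ge a c with h' | h'
    · exact lt_trans (ih h') (nk_lt_succ c)
    · have : a = c := by omega
      subst this
      exact nk_lt_succ a

lemma Height : ∀ k, W (nk k) = k ∧ W (pell (2*k+1) - 1) = 0 := by
  intro k
  induction k with
  | zero =>
    constructor
    · simpa [nk] using W_zero
    · have : pell 1 - 1 = 0 := by simp [pell]
      rw [show 2*0+1 = 1 from rfl, this, W_zero]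
  | succ k ih =>
    obtain ⟨ih1, ih2⟩ := ih
    have hQpos := pell_pos (2*k+1) (by omega)
    obtain ⟨a, ha⟩ : ∃ a, pell (2*k+1) = a + 1 := ⟨pell (2*k+1) - 1, by omega⟩
    have hW1 : W (nk (k+1)) = (k:ℤ) + 1 := by
      have h1 : nk (k+1) = (nk k + a) + 1 := by rw [nk_succ, ha]; omega
      have h2 : W (nk k + a) = W (nk k) - W a := Refl k a (by omega)
      have h3 : stp ((nk k + a) + 1) = 1 := by
        have : (nk k + a) + 1 = nk k + pell (2*k+1) := by omega
        rw [this]; exact stepB k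
      have h4 : W a = 0 := by
        have : a = pell (2*k+1) - 1 := by omega
        rw [this]; exact ih2
      rw [h1, W_succ, h2, h3, h4, ih1]
      ring
    refine ⟨hW1, ?_⟩
    -- second part : W (pell (2*(k+1)+1) - 1) = 0
    obtain ⟨N, hN⟩ : ∃ N, N = nk (k+1) := ⟨_, rfl⟩
    have hW1' : W N = (k:ℤ) + 1 := by rw [hN]; exact hW1
    have h2N : 2 * N = pell (2*(k+1)) := by rw [hN]; exact two_nk (k+1)
    have hQ' : pell (2*(k+1)+1) = 4*N + a + 1 := by
      have e1 : pell (2*k+3) = 2*pell (2*k+2) + pell (2*k+1) := rfl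
      have e2 : 2*(k+1)+1 = 2*k+3 := by ring
      have e3 : 2*(k+1) = 2*k+2 := by ring
      rw [e2, e1]
      rw [e3] at h2N
      omega
    have hNpos : 1 ≤ N := by rw [hN]; exact nk_pos (k+1) (by omega)
    have h4 : W a = 0 := by
      have : a = pell (2*k+1) - 1 := by omega
      rw [this]; exact ih2
    have hrefl : ∀ m, m < pell (2*(k+1)+1) → W (N + m) = (k:ℤ) + 1 - W m := by
      intro m hmlt
      have := Refl (k+1) m hmlt
      rw [← hN] at this
      rw [this, hW1']
    have c1 : W (N + a) = (k:ℤ) + 1 - W a := hrefl a (by omega)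
    have c2 : W (N + (N + a)) = (k:ℤ) + 1 - W (N + a) := hrefl (N + a) (by omega)
    have c3 : W (N + (N + (N + a))) = (k:ℤ) + 1 - W (N + (N + a)) := hrefl (N + (N + a)) (by omega)
    have c4 : W (N + (N + (N + (N + a)))) = (k:ℤ) + 1 - W (N + (N + (N + a))) :=
      hrefl (N + (N + (N + a))) (by omega)
    have hidx : pell (2*(k+1)+1) - 1 = N + (N + (N + (N + a))) := by omega
    rw [hidx, c4, c3, c2, c1, h4]
    ring

lemma exists_k : ∀ n, 1 ≤ n → ∃ k, 1 ≤ k ∧ nk k ≤ n ∧ n < nk (k+1) := by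
  intro n hn
  induction n with
  | zero => omega
  | succ m ih =>
    rcases Nat.lt_or_ge m 1 with h1 | h1
    · -- m = 0, n = 1
      have : m = 0 := by omega
      subst this
      exact ⟨1, by omega, by decide, by decide⟩
    · obtain ⟨k, hk1, hk2, hk3⟩ := ih h1
      rcases Nat.lt_or_ge (m+1) (nk (k+1)) with h | h
      · exact ⟨k, hk1, by omega, h⟩
      · have hm1 : m + 1 = nk (k+1) := by omega
        refine ⟨k+1, by omega, by omega, ?_⟩
        have := nk_lt_succ (k+1)
        omega

lemma Bounds : ∀ n : ℕ, 0 ≤ W n ∧ ∀ k : ℕ, n < nk (k+1) → W n ≤ (k:ℤ) := by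
  intro n
  induction n using Nat.strong_induction_on with
  | _ n ih =>
    rcases Nat.lt_or_ge n 1 with h0 | h0
    · have : n = 0 := by omega
      subst this
      rw [W_zero]
      exact ⟨le_refl 0, fun k _ => by exact_mod_cast Int.ofNat_nonneg k⟩
    · obtain ⟨k, hk1, hk2, hk3⟩ := exists_k n h0
      set m := n - nk k with hm
      have hnm : n = nk k + m := by omega
      have hmQ : m < pell (2*k+1) := by
        have := nk_succ k
        omega
      have hmn : m < n := by
        have := nk_pos k hk1
        omega
      have hWn : W n = (k:ℤ) - W m := by
        rw [hnm, Refl k m hmQ, (Height k).1]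
      obtain ⟨ihm1, ihm2⟩ := ih m hmn
      have hmlt : m < nk (k+1) := by
        have := nk_succ k
        omega
      have hWm : W m ≤ (k:ℤ) := ihm2 k hmlt
      have hWn0 : 0 ≤ W n := by rw [hWn]; linarith
      refine ⟨hWn0, fun k' hk' => ?_⟩
      have hkk' : k ≤ k' := by
        by_contra hc
        push_neg at hc
        have : nk (k'+1) ≤ nk k := by
          rcases Nat.eq_or_lt_of_le (by omega : k'+1 ≤ k) with he | hl
          · rw [he]
          · exact le_of_lt (nk_mono hl)
        omega
      have : W n ≤ (k:ℤ) := by rw [hWn]; linarith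
      have : (k:ℤ) ≤ (k':ℤ) := by exact_mod_cast hkk'
      linarith

lemma IVT : ∀ n : ℕ, ∀ c : ℤ, 0 ≤ c → c ≤ W n → ∃ m, m ≤ n ∧ W m = c := by
  intro n
  induction n with
  | zero =>
    intro c h0 h1
    rw [W_zero] at h1
    exact ⟨0, le_refl 0, by rw [W_zero]; omega⟩
  | succ n ih =>
    intro c h0 h1
    rcases le_or_gt c (W n) with h | h
    · obtain ⟨m, hm1, hm2⟩ := ih c h0 h
      exact ⟨m, by omega, hm2⟩
    · refine ⟨n+1, le_refl _, ?_⟩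
      have hstep := W_succ n
      rcases stp_pm (n+1) with hs | hs <;> rw [hs] at hstep <;> omega

/-- The records of `S_n(2√2)` are exactly the half even-indexed Pell numbers `P_{2n}/2`. -/
theorem stmt_7 (N : ℕ) :
    IsRecord (2 * Real.sqrt 2) N ↔ ∃ n : ℕ, 2 * N = pell (2 * n) := by
  constructor
  · intro hrec
    rcases Nat.lt_or_ge N 1 with h0 | h0
    · exact ⟨0, by have : pell (2*0) = 0 := rfl; omega⟩
    · obtain ⟨k, hk1, hk2, hk3⟩ := exists_k N h0
      have hNk : N = nk k := by
        by_contra hc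
        have hlt : nk k < N := by omega
        have hWN0 : 0 ≤ W N := (Bounds N).1
        have hWNk : W N ≤ (k:ℤ) := (Bounds N).2 k hk3
        have hWnk : W (nk k) = (k:ℤ) := (Height k).1
        obtain ⟨m, hm1, hm2⟩ := IVT (nk k) (W N) hWN0 (by rw [hWnk]; exact hWNk)
        exact hrec m (by omega) (hm2.trans rfl) |>.elim
      refine ⟨k, ?_⟩
      rw [hNk]
      exact two_nk k
  · rintro ⟨n, hn⟩
    rcases Nat.lt_or_ge n 1 with h0 | h0
    · have : n = 0 := by omega
      subst this
      have : N = 0 := by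
        have : pell (2*0) = 0 := rfl
        omega
      subst this
      intro m hm
      omega
    · have hN : N = nk n := by
        have := two_nk n
        omega
      intro m hm
      have hWN : W N = (n:ℤ) := by rw [hN]; exact (Height n).1
      have hmlt : m < nk ((n-1)+1) := by
        have : (n-1)+1 = n := by omega
        rw [this, ← hN]
        exact hm
      have hWm : W m ≤ ((n-1:ℕ):ℤ) := (Bounds m).2 (n-1) hmlt
      have : ((n-1:ℕ):ℤ) < (n:ℤ) := by
        have : (n-1) < n := by omega
        exact_mod_cast this
      intro heq
      have : W m = W N := heq
      omega
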